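/- Let (L,[-,-],{-,-,-},R) be a modified Rota-Baxter Lie-Yamaguti algebra. Define new operations [x,y]_R := [Rx,y] + [x,Ry] and {x,y,z}_R := {x,Ry,Rz} + {Rx,y,Rz} + {Rx,Ry,z} + {x,y,z} for all x,y,z in L. Then (L, [-,-]_R, {-,-,-}_R) is a Lie-Yamaguti algebra (denoted L_R). -/
import Mathlib


/-- A Lie-Yamaguti algebra: bilinear bracket `br`, trilinear bracket `tr`,
satisfying (LY1)-(LY6). -/
structure LieYamaguti (K : Type*) (L : Type*) [Field K] [AddCommGroup L] [Module K L] where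
  br : L →ₗ[K] L →ₗ[K] L
  tr : L →ₗ[K] L →ₗ[K] L →ₗ[K] L
  ly1 : ∀ x y, br x y = - br y x
  ly2 : ∀ x y z, tr x y z = - tr y x z
  ly3 : ∀ x y z,
    br (br x y) z + br (br y z) x + br (br z x) y + tr x y z + tr y z x + tr z x y = 0
  ly4 : ∀ x y z a, tr (br x y) z a + tr (br z x) y a + tr (br y z) x a = 0
  ly5 : ∀ a b x y, tr a b (br x y) = br (tr a b x) y + br x (tr a b y)
  ly6 : ∀ a b x y z,
    tr a b (tr x y z) = tr (tr a b x) y z + tr x (tr a b y) z + tr x y (tr a b z)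

/-- A modified Rota-Baxter operator on a Lie-Yamaguti algebra. -/
def IsMRB {K L : Type*} [Field K] [AddCommGroup L] [Module K L]
    (A : LieYamaguti K L) (R : L →ₗ[K] L) : Prop :=
  (∀ x y, A.br (R x) (R y) = R (A.br (R x) y + A.br x (R y)) - A.br x y) ∧
  (∀ x y z, A.tr (R x) (R y) (R z) =
      R (A.tr x (R y) (R z) + A.tr (R x) y (R z) + A.tr (R x) (R y) z + A.tr x y z)
      - A.tr (R x) y z - A.tr x (R y) z - A.tr x y (R z))

set_option maxHeartbeats 2000000 in
/-- The descendent structure: if `(L,R)` is a modified Rota-Baxter Lie-Yamaguti algebra,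
then `[x,y]_R := [Rx,y] + [x,Ry]` and
`{x,y,z}_R := {x,Ry,Rz} + {Rx,y,Rz} + {Rx,Ry,z} + {x,y,z}` give a Lie-Yamaguti algebra
structure `L_R` on `L`. -/
theorem descendent_isLieYamaguti (K L : Type*) [Field K] [CharZero K]
    [AddCommGroup L] [Module K L]
    (A : LieYamaguti K L) (R : L →ₗ[K] L) (hR : IsMRB A R) :
    ∃ B : LieYamaguti K L,
      (∀ x y, B.br x y = A.br (R x) y + A.br x (R y)) ∧
      (∀ x y z, B.tr x y z
          = A.tr x (R y) (R z) + A.tr (R x) y (R z) + A.tr (R x) (R y) z + A.tr x y z) := by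
  classical
  -- the post-composition operator `g ↦ g ∘ₗ R`
  set post : (L →ₗ[K] L) →ₗ[K] (L →ₗ[K] L) := (LinearMap.llcomp K L L L).flip R with hpost
  -- deformed bilinear bracket
  set brR : L →ₗ[K] L →ₗ[K] L := A.br ∘ₗ R + A.br.compl₂ R with hbrRdef
  -- deformed trilinear bracket
  set trR : L →ₗ[K] L →ₗ[K] L →ₗ[K] L :=
    ((A.tr.compl₂ R).compr₂ post) + ((A.tr ∘ₗ R).compr₂ post) + ((A.tr ∘ₗ R).compl₂ R) + A.tr
    with htrRdef
  have hbr : ∀ x y, brR x y = A.br (R x) y + A.br x (R y) := by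
    intro x y
    simp [hbrRdef, LinearMap.add_apply, LinearMap.compl₂_apply, LinearMap.comp_apply]
  have htr : ∀ x y z, trR x y z
      = A.tr x (R y) (R z) + A.tr (R x) y (R z) + A.tr (R x) (R y) z + A.tr x y z := by
    intro x y z
    simp [htrRdef, hpost, LinearMap.add_apply, LinearMap.compr₂_apply, LinearMap.compl₂_apply,
      LinearMap.comp_apply, LinearMap.llcomp_apply, LinearMap.flip_apply]
  -- key consequences of the modified Rota-Baxter identities
  have hb' : ∀ x y, R (A.br (R x) y + A.br x (R y)) = A.br (R x) (R y) + A.br x y := by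
    intro x y
    have := hR.1 x y
    linear_combination (norm := module) -this
  have ht' : ∀ x y z,
      R (A.tr x (R y) (R z) + A.tr (R x) y (R z) + A.tr (R x) (R y) z + A.tr x y z)
      = A.tr (R x) (R y) (R z) + A.tr (R x) y z + A.tr x (R y) z + A.tr x y (R z) := by
    intro x y z
    have := hR.2 x y z
    linear_combination (norm := module) -this
  refine ⟨⟨brR, trR, ?_, ?_, ?_, ?_, ?_, ?_⟩, hbr, htr⟩
  · -- LY1
    intro x y
    simp only [hbr]
    rw [A.ly1 (R x) y, A.ly1 x (R y)]
    abel
  · -- LY2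
    intro x y z
    simp only [htr]
    rw [A.ly2 x (R y) (R z), A.ly2 (R x) y (R z), A.ly2 (R x) (R y) z, A.ly2 x y z]
    abel
  · -- LY3
    intro x y z
    simp only [hbr, htr]
    rw [hb' x y, hb' y z, hb' z x]
    simp only [map_add, LinearMap.add_apply]
    linear_combination (norm := module)
      A.ly3 x y z + A.ly3 (R x) (R y) z + A.ly3 x (R y) (R z) + A.ly3 (R x) y (R z)
  · -- LY4
    intro x y z a
    simp only [hbr, htr]
    rw [hb' x y, hb' z x, hb' y z]
    simp only [map_add, LinearMap.add_apply]
    linear_combination (norm := module)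
      A.ly4 x y z (R a) + A.ly4 (R x) (R y) z (R a) + A.ly4 x (R y) (R z) (R a)
        + A.ly4 (R x) y (R z) (R a)
        + A.ly4 (R x) (R y) (R z) a + A.ly4 x y (R z) a + A.ly4 (R x) y z a
        + A.ly4 x (R y) z a
  · -- LY5
    intro a b x y
    simp only [hbr, htr]
    rw [hb' x y, ht' a b x, ht' a b y]
    simp only [map_add, LinearMap.add_apply]
    linear_combination (norm := module)
      A.ly5 a (R b) (R x) (R y) + A.ly5 a (R b) x y + A.ly5 (R a) b (R x) (R y)
        + A.ly5 (R a) b x y + A.ly5 (R a) (R b) (R x) y + A.ly5 (R a) (R b) x (R y)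
        + A.ly5 a b (R x) y + A.ly5 a b x (R y)
  · -- LY6
    intro a b x y z
    simp only [htr]
    rw [ht' x y z, ht' a b x, ht' a b y, ht' a b z]
    simp only [map_add, LinearMap.add_apply]
    linear_combination (norm := module)
      A.ly6 a b x (R y) (R z) + A.ly6 a b (R x) y (R z) + A.ly6 a b (R x) (R y) z
        + A.ly6 a b x y z
        + A.ly6 a (R b) (R x) (R y) (R z) + A.ly6 a (R b) (R x) y z
        + A.ly6 a (R b) x (R y) z + A.ly6 a (R b) x y (R z)
        + A.ly6 (R a) b (R x) (R y) (R z) + A.ly6 (R a) b (R x) y z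
        + A.ly6 (R a) b x (R y) z + A.ly6 (R a) b x y (R z)
        + A.ly6 (R a) (R b) x (R y) (R z) + A.ly6 (R a) (R b) (R x) y (R z)
        + A.ly6 (R a) (R b) (R x) (R y) z + A.ly6 (R a) (R b) x y z
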